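/- If a finite family (F_i)_{i∈I} of clause-sets satisfies: any two distinct members share at most one variable, and the variable-interaction graph (vertices I, edge between i≠j iff var(F_i)∩var(F_j)≠∅) is acyclic, then the bipartite incidence graph of the family is acyclic. -/

import Mathlib

namespace Stmt3

def vars (F : Finset (Finset (ℕ × Bool))) : Finset ℕ := F.biUnion fun C => C.image Prod.fst

/-- The bipartite incidence graph of a family of clause-sets. -/
def incG {I : Type} (F : I → Finset (Finset (ℕ × Bool))) : SimpleGraph (ℕ ⊕ I) where
  Adj a b :=
    (∃ v i, a = Sum.inl v ∧ b = Sum.inr i ∧ v ∈ vars (F i)) ∨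
    (∃ v i, b = Sum.inl v ∧ a = Sum.inr i ∧ v ∈ vars (F i))
  symm := by
    constructor
    rintro a b (⟨v, i, h1, h2, hv⟩ | ⟨v, i, h1, h2, hv⟩)
    · exact Or.inr ⟨v, i, h1, h2, hv⟩
    · exact Or.inl ⟨v, i, h1, h2, hv⟩
  loopless := by
    constructor
    intro a h
    rcases h with ⟨v, i, h1, h2, _⟩ | ⟨v, i, h1, h2, _⟩ <;> rw [h1] at h2 <;> simp at h2

/-- The variable-interaction graph: vertices are the indices, with an edge between `i ≠ j`
iff `F i` and `F j` share a variable. -/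
def varG {I : Type} (F : I → Finset (Finset (ℕ × Bool))) : SimpleGraph I where
  Adj i j := i ≠ j ∧ (vars (F i) ∩ vars (F j)).Nonempty
  symm := by
    constructor
    intro i j h
    exact ⟨h.1.symm, by rw [Finset.inter_comm]; exact h.2⟩
  loopless := ⟨fun i h => h.1 rfl⟩

/-- Projection of a non-backtracking walk in the incidence graph between two index
vertices to a walk in the variable-interaction graph. -/
lemma proj {I : Type} (F : I → Finset (Finset (ℕ × Bool))) :
    ∀ (n : ℕ) {i j : I} (w : (incG F).Walk (Sum.inr i) (Sum.inr j)),
      w.length = n → w.edges.Chain' (· ≠ ·) →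
      ∃ p : (varG F).Walk i j, w.length = 2 * p.length ∧
        p.support = w.support.filterMap Sum.getRight? := by
  intro n
  induction n using Nat.strong_induction_on with
  | _ n ih =>
    intro i j w hn hch
    cases w with
    | nil => exact ⟨SimpleGraph.Walk.nil, by simp, by simp⟩
    | cons h1 w1 =>
      rename_i b
      rcases id h1 with ⟨v, i', hb1, _, _⟩ | ⟨v, i', hb1, hb2, hv⟩
      · exact absurd hb1 (by simp)
      have hi' : i = i' := by simpa using hb2
      subst hi'
      subst hb1
      cases w1 with
      | cons h2 w2 =>
        rename_i b2
        rcases id h2 with ⟨v', i', hc1, hc2, hv'⟩ | ⟨v', i', _, hc2, _⟩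
        swap
        · exact absurd hc2 (by simp)
        have hvv : v = v' := by simpa using hc1
        subst hvv
        subst hc2
        simp only [SimpleGraph.Walk.edges_cons, SimpleGraph.Walk.edges_cons,
          List.Chain', List.isChain_cons_cons] at hch
        obtain ⟨hne, hch2⟩ := hch
        have hii : i ≠ i' := by
          intro h
          subst h
          exact hne Sym2.eq_swap
        have hlen2 : w2.length < n := by
          simp only [SimpleGraph.Walk.length_cons] at hn
          omega
        obtain ⟨p', hl', hs'⟩ := ih w2.length hlen2 w2 rfl hch2.tail
        have hadj : (varG F).Adj i i' := ⟨hii, ⟨v, Finset.mem_inter.2 ⟨hv, hv'⟩⟩⟩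
        refine ⟨SimpleGraph.Walk.cons hadj p', ?_, ?_⟩
        · simp only [SimpleGraph.Walk.length_cons]
          omega
        · simp [SimpleGraph.Walk.support_cons, hs', List.filterMap_cons]

lemma proj_closed {I : Type} (F : I → Finset (Finset (ℕ × Bool))) {i : I}
    (w : (incG F).Walk (Sum.inr i) (Sum.inr i)) (hw : w.IsCycle) :
    ∃ p : (varG F).Walk i i, w.length = 2 * p.length ∧
      p.support = w.support.filterMap Sum.getRight? :=
  proj F w.length w rfl (List.Pairwise.isChain hw.isTrail.edges_nodup)

/-- A 4-cycle in the incidence graph through an index vertex is impossible. -/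
lemma no_four_cycle {I : Type} (F : I → Finset (Finset (ℕ × Bool)))
    (hshare : ∀ i j : I, i ≠ j → (vars (F i) ∩ vars (F j)).card ≤ 1)
    {i₀ : I} (w : (incG F).Walk (Sum.inr i₀) (Sum.inr i₀))
    (hw : w.IsCycle) (h4 : w.length = 4) : False := by
  cases w with
  | nil => simp at h4
  | cons h1 w1 =>
    rcases id h1 with ⟨v₁, i', hb1, _, _⟩ | ⟨v₁, i', hb1, hb2, hv1⟩
    · exact absurd hb1 (by simp)
    have hi' : i₀ = i' := by simpa using hb2
    rw [← hi'] at hv1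
    subst hb1
    cases w1 with
    | cons h2 w2 =>
      rcases id h2 with ⟨v₁', i₁, hc1, hc2, hv2⟩ | ⟨v₁', i₁, _, hc2, _⟩
      swap
      · exact absurd hc2 (by simp)
      have hveq : v₁ = v₁' := by simpa using hc1
      rw [← hveq] at hv2
      subst hc2
      cases w2 with
      | nil => simp at h4
      | cons h3 w3 =>
        rcases id h3 with ⟨v₂, i₁', hd1, _, _⟩ | ⟨v₂, i₁', hd1, hd2, hv3⟩
        · exact absurd hd1 (by simp)
        have hi1' : i₁ = i₁' := by simpa using hd2
        rw [← hi1'] at hv3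
        subst hd1
        cases w3 with
        | cons h5 w4 =>
          rcases id h5 with ⟨v₂', i₂, he1, he2, hv4⟩ | ⟨v₂', i₂, _, he2, _⟩
          swap
          · exact absurd he2 (by simp)
          have hveq2 : v₂ = v₂' := by simpa using he1
          rw [← hveq2] at hv4
          subst he2
          have hw4 : w4.length = 0 := by
            simp only [SimpleGraph.Walk.length_cons] at h4
            omega
          have hi₀' : (Sum.inr i₂ : ℕ ⊕ I) = Sum.inr i₀ :=
            SimpleGraph.Walk.eq_of_length_eq_zero hw4
          have hi0 : i₂ = i₀ := by simpa using hi₀'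
          rw [hi0] at hv4
          have hnodup := hw.support_nodup
          simp only [SimpleGraph.Walk.support_cons, List.tail_cons] at hnodup
          rw [List.nodup_cons, List.nodup_cons] at hnodup
          obtain ⟨ha, hb, -⟩ := hnodup
          have hvne : v₁ ≠ v₂ := by
            intro h
            exact ha (by rw [h]; exact List.mem_cons_of_mem _ List.mem_cons_self)
          have hine : i₀ ≠ i₁ := by
            intro h
            exact hb (List.mem_cons_of_mem _ (by rw [← h]; exact w4.end_mem_support))
          have hcard : 2 ≤ (vars (F i₀) ∩ vars (F i₁)).card := by
            have hsub : ({v₁, v₂} : Finset ℕ) ⊆ vars (F i₀) ∩ vars (F i₁) := by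
              intro x hx
              simp only [Finset.mem_insert, Finset.mem_singleton] at hx
              rcases hx with rfl | rfl
              · exact Finset.mem_inter.2 ⟨hv1, hv2⟩
              · exact Finset.mem_inter.2 ⟨hv4, hv3⟩
            calc 2 = ({v₁, v₂} : Finset ℕ).card := (Finset.card_pair hvne).symm
              _ ≤ _ := Finset.card_le_card hsub
          have := hshare i₀ i₁ hine
          omega

/-- If any two distinct members share at most one variable and the variable-interaction
graph is acyclic, then the bipartite incidence graph is acyclic. -/
theorem incidence_acyclic {I : Type} [Fintype I]
    (F : I → Finset (Finset (ℕ × Bool)))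
    (hshare : ∀ i j : I, i ≠ j → (vars (F i) ∩ vars (F j)).card ≤ 1)
    (hvar : (varG F).IsAcyclic) :
    (incG F).IsAcyclic := by
  classical
  intro x c hc
  -- find an index vertex in the support of the cycle
  have hmem : ∃ i : I, Sum.inr i ∈ c.support := by
    cases x with
    | inr i => exact ⟨i, c.start_mem_support⟩
    | inl v =>
      cases c with
      | nil => exact absurd hc (by simp [SimpleGraph.Walk.IsCycle])
      | cons h w =>
        rcases id h with ⟨v', i', _, hb2, _⟩ | ⟨v', i', _, hb2, _⟩
        · subst hb2
          exact ⟨i', by simp [SimpleGraph.Walk.support_cons]⟩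
        · exact absurd hb2 (by simp)
  obtain ⟨i₀, hmem⟩ := hmem
  have hc' : (c.rotate _ hmem).IsCycle := hc.rotate hmem
  set c' := c.rotate _ hmem with hc'def
  obtain ⟨p, hlen, hsup⟩ := proj_closed F c' hc'
  have h3 : 3 ≤ c'.length := hc'.three_le_length
  have hplen : 2 ≤ p.length := by omega
  -- support tail of p is Nodup
  have hpnodup : p.support.tail.Nodup := by
    have h1 : c'.support = Sum.inr i₀ :: c'.support.tail :=
      (c'.support_eq_cons).trans (by simp)
    have h2 : p.support = i₀ :: (c'.support.tail.filterMap Sum.getRight?) := by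
      rw [hsup, h1, List.filterMap_cons_some Sum.getRight?_inr, List.tail_cons]
    have h3' : p.support.tail = c'.support.tail.filterMap Sum.getRight? := by
      rw [h2, List.tail_cons]
    rw [h3']
    refine List.Nodup.filterMap ?_ hc'.support_nodup
    rintro a a' b hb hb'
    cases a with
    | inl u => simp at hb
    | inr k =>
      cases a' with
      | inl u => simp at hb'
      | inr k' =>
        simp only [Sum.getRight?_inr, Option.mem_some_iff] at hb hb'
        rw [hb, hb']
  -- path uniqueness in varG forces p to have length 2
  have hp2 : p.length = 2 := by
    cases p with
    | nil => simp at hplen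
    | cons h q =>
      have hqpath : q.IsPath := by
        rw [SimpleGraph.Walk.isPath_def]
        simpa [SimpleGraph.Walk.support_cons] using hpnodup
      have heq := hvar.path_unique ⟨q, hqpath⟩ (SimpleGraph.Path.singleton h.symm)
      have hq1 : q.length = 1 := by
        have := congrArg (fun (r : (varG F).Path _ _) => r.1.length) heq
        simpa [SimpleGraph.Path.singleton] using this
      simp [hq1]
  exact no_four_cycle F hshare c' hc' (by omega)

end Stmt3
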